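/- Define α = −3/8 − i√7/8, ω = 1/2 − i√3/2 and ε = 1/2 − i√7/2, and let ᾱ, ω̄, ε̄ denote their complex conjugates. Then F_D^{(6)}(2; 1/2, 1/2, 1/2, 1/2, 1/2, 1/2; 3 | −1, ω, ω̄, −2, ε, ε̄) = (2/3) · F_1(1; 1/2, 1/2; 3/2 | α, ᾱ). -/

import Mathlib

open MeasureTheory

noncomputable def lauricellaFD (n : ℕ) (a : ℂ) (b : Fin n → ℂ) (c : ℂ) (x : Fin n → ℂ) : ℂ :=
  (Complex.Gamma c / (Complex.Gamma a * Complex.Gamma (c - a))) *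
    ∫ u in (0:ℝ)..1, (u : ℂ) ^ (a - 1) * ((1 : ℂ) - u) ^ (c - a - 1) *
      ∏ k, ((1 : ℂ) - x k * u) ^ (-(b k))

noncomputable def appellF1 (a b₁ b₂ c x₁ x₂ : ℂ) : ℂ :=
  lauricellaFD 2 a ![b₁, b₂] c ![x₁, x₂]

noncomputable def ellipticK (k : ℝ) : ℝ :=
  ∫ θ in (0:ℝ)..(Real.pi/2), (1 - k ^ 2 * Real.sin θ ^ 2) ^ (-(1:ℝ)/2)

/-! ### Auxiliary real functions -/

noncomputable def fL (u : ℝ) : ℝ :=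
  u * (1+u) ^ (-(1/2):ℝ) * (1-u+u^2) ^ (-(1/2):ℝ) * (1+2*u) ^ (-(1/2):ℝ)
    * (1-u+2*u^2) ^ (-(1/2):ℝ)

noncomputable def gR (v : ℝ) : ℝ :=
  (1-v) ^ (-(1/2):ℝ) * (1+3/4*v+1/4*v^2) ^ (-(1/2):ℝ)

noncomputable def phi (u : ℝ) : ℝ := (3*u^2 - u^3)/(1+u^3)

noncomputable def phid (u : ℝ) : ℝ := 3*u*(1-u)*(2+u+u^2)/(1+u^3)^2

lemma quadg_pos (v : ℝ) : 0 < 1+3/4*v+1/4*v^2 := by nlinarith [sq_nonneg (v+3/2)]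

lemma sq_rpow_neg_half {a : ℝ} (ha : 0 < a) : (a ^ (-(1/2):ℝ))^2 = a⁻¹ := by
  rw [← Real.rpow_natCast (a ^ (-(1/2):ℝ)) 2, ← Real.rpow_mul ha.le]
  norm_num
  exact Real.rpow_neg_one a

lemma phi_one_sub {x : ℝ} (hx : 0 ≤ x) :
    1 - phi x = (1-x)^2*(1+2*x)/(1+x^3) := by
  have hQ : (0:ℝ) < 1+x^3 := by positivity
  unfold phi; field_simp; ring

lemma phi_quad {x : ℝ} (hx : 0 ≤ x) :
    1+3/4*phi x+1/4*(phi x)^2 = (2+x+x^2)^2*(1-x+2*x^2)/(4*(1+x^3)^2) := by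
  have hQ : (0:ℝ) < 1+x^3 := by positivity
  unfold phi; field_simp; ring

lemma phi_nonneg {x : ℝ} (hx : 0 ≤ x) (hx1 : x ≤ 1) : 0 ≤ phi x := by
  unfold phi
  apply div_nonneg _ (by positivity)
  nlinarith [mul_nonneg (sq_nonneg x) (by linarith : (0:ℝ) ≤ 3 - x)]

lemma pointwise_subst {x : ℝ} (hx : 0 ≤ x) (hx1 : x < 1) :
    phid x * gR (phi x) = 6 * fL x := by
  have hA : (0:ℝ) < 1+x := by linarith
  have hB : (0:ℝ) < 1-x+x^2 := by nlinarith [sq_nonneg (x-1/2)]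
  have hC : (0:ℝ) < 1+2*x := by linarith
  have hD : (0:ℝ) < 1-x+2*x^2 := by nlinarith [sq_nonneg (x-1/4)]
  have hQ : (0:ℝ) < 1+x^3 := by positivity
  have h1x : (0:ℝ) < 1-x := by linarith
  have hE : (0:ℝ) < 2+x+x^2 := by positivity
  have h1 : 0 < 1 - phi x := by
    rw [phi_one_sub hx]; positivity
  have h2 : 0 < 1+3/4*phi x+1/4*(phi x)^2 := quadg_pos _
  have hLnn : 0 ≤ phid x * gR (phi x) := by
    apply mul_nonneg
    · unfold phid; positivity
    · unfold gR
      exact mul_nonneg (Real.rpow_nonneg h1.le _) (Real.rpow_nonneg h2.le _)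
  have hRnn : 0 ≤ 6 * fL x := by
    unfold fL; positivity
  refine (sq_eq_sq₀ hLnn hRnn).mp ?_
  have e1 : (phid x * gR (phi x))^2
      = (phid x)^2 * ((1 - phi x)⁻¹ * (1+3/4*phi x+1/4*(phi x)^2)⁻¹) := by
    unfold gR
    rw [mul_pow, mul_pow, sq_rpow_neg_half h1, sq_rpow_neg_half h2]
  have e2 : (6 * fL x)^2
      = 36 * (x^2 * ((1+x)⁻¹ * ((1-x+x^2)⁻¹ * ((1+2*x)⁻¹ * (1-x+2*x^2)⁻¹)))) := by
    unfold fL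
    rw [mul_pow, mul_pow, mul_pow, mul_pow, mul_pow,
      sq_rpow_neg_half hA, sq_rpow_neg_half hB, sq_rpow_neg_half hC, sq_rpow_neg_half hD]
    ring
  rw [e1, e2, phi_one_sub hx, phi_quad hx]
  unfold phid
  field_simp
  ring

lemma fL_contOn : ContinuousOn fL (Set.Icc 0 1) := by
  intro x hx
  obtain ⟨hx0, hx1⟩ := hx
  have hA : (0:ℝ) < 1+x := by linarith
  have hB : (0:ℝ) < 1-x+x^2 := by nlinarith [sq_nonneg (x-1/2)]
  have hC : (0:ℝ) < 1+2*x := by linarith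
  have hD : (0:ℝ) < 1-x+2*x^2 := by nlinarith [sq_nonneg (x-1/4)]
  apply ContinuousAt.continuousWithinAt
  unfold fL
  have c1 : ContinuousAt (fun u : ℝ => (1+u) ^ (-(1/2):ℝ)) x :=
    ContinuousAt.rpow_const (by fun_prop) (Or.inl hA.ne')
  have c2 : ContinuousAt (fun u : ℝ => (1-u+u^2) ^ (-(1/2):ℝ)) x :=
    ContinuousAt.rpow_const (by fun_prop) (Or.inl hB.ne')
  have c3 : ContinuousAt (fun u : ℝ => (1+2*u) ^ (-(1/2):ℝ)) x :=
    ContinuousAt.rpow_const (by fun_prop) (Or.inl hC.ne')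
  have c4 : ContinuousAt (fun u : ℝ => (1-u+2*u^2) ^ (-(1/2):ℝ)) x :=
    ContinuousAt.rpow_const (by fun_prop) (Or.inl hD.ne')
  exact ((((continuousAt_id.mul c1).mul c2).mul c3).mul c4)

lemma gR_intble : IntervalIntegrable gR volume 0 1 := by
  have h1 : IntervalIntegrable (fun v : ℝ => (1-v) ^ (-(1/2):ℝ)) volume 0 1 := by
    have := (intervalIntegral.intervalIntegrable_rpow' (a := 0) (b := 1) (r := -(1/2)) (by norm_num)).comp_sub_left 1
    simpa using this.symm
  have h2 : ContinuousOn (fun v : ℝ => (1+3/4*v+1/4*v^2) ^ (-(1/2):ℝ)) (Set.uIcc 0 1) := by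
    intro x _
    have hc : Continuous (fun v : ℝ => 1+3/4*v+1/4*v^2) := by fun_prop
    exact (hc.continuousAt.rpow_const (Or.inl (quadg_pos x).ne')).continuousWithinAt
  exact h1.mul_continuousOn h2

lemma subst_lemma {b : ℝ} (hb0 : 0 ≤ b) (hb1 : b < 1) :
    ∫ x in (0:ℝ)..b, 6 * fL x = ∫ v in (0:ℝ)..(phi b), gR v := by
  have huIcc : Set.uIcc (0:ℝ) b = Set.Icc 0 b := Set.uIcc_of_le hb0
  have hder : ∀ x ∈ Set.uIcc (0:ℝ) b, HasDerivAt phi (phid x) x := by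
    intro x hx
    rw [huIcc] at hx
    have hQ : (0:ℝ) < 1+x^3 := by nlinarith [pow_nonneg hx.1 3]
    have h1 : HasDerivAt (fun u:ℝ => 3*u^2 - u^3) (6*x - 3*x^2) x := by
      have := ((hasDerivAt_pow 2 x).const_mul (3:ℝ)).sub (hasDerivAt_pow 3 x)
      refine this.congr_deriv ?_
      norm_num
      ring
    have h2 : HasDerivAt (fun u:ℝ => 1+u^3) (3*x^2) x := by
      have := (hasDerivAt_pow 3 x).const_add (1:ℝ)
      exact this.congr_deriv (by norm_num)
    have := h1.div h2 hQ.ne'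
    refine this.congr_deriv ?_
    unfold phid
    field_simp
    ring
  have hderc : ContinuousOn phid (Set.uIcc (0:ℝ) b) := by
    intro x hx
    rw [huIcc] at hx
    have hQ : (0:ℝ) < 1+x^3 := by nlinarith [pow_nonneg hx.1 3]
    have hcn : ContinuousAt (fun u:ℝ => 3*u*(1-u)*(2+u+u^2)) x := by fun_prop
    have hcd : ContinuousAt (fun u:ℝ => (1+u^3)^2) x := by fun_prop
    exact (hcn.div hcd (by simpa using pow_ne_zero 2 hQ.ne')).continuousWithinAt
  have hgc : ContinuousOn gR (phi '' Set.uIcc (0:ℝ) b) := by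
    rintro v ⟨x, hx, rfl⟩
    rw [huIcc] at hx
    have hx1 : x < 1 := lt_of_le_of_lt hx.2 hb1
    have h1 : 0 < 1 - phi x := by
      rw [phi_one_sub hx.1]
      have hx' : (0:ℝ) < 1 - x := by linarith
      exact div_pos (mul_pos (pow_pos hx' 2) (by linarith [hx.1])) (by nlinarith [pow_nonneg hx.1 3])
    have hc1 : Continuous (fun v : ℝ => 1-v) := by fun_prop
    have hc2 : Continuous (fun v : ℝ => 1+3/4*v+1/4*v^2) := by fun_prop
    apply ContinuousAt.continuousWithinAt
    exact (hc1.continuousAt.rpow_const (Or.inl h1.ne')).mul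
      (hc2.continuousAt.rpow_const (Or.inl (quadg_pos _).ne'))
  have key := intervalIntegral.integral_comp_smul_deriv' hder hderc hgc
  have hphi0 : phi 0 = 0 := by unfold phi; norm_num
  rw [hphi0] at key
  rw [← key]
  apply intervalIntegral.integral_congr
  intro x hx
  rw [huIcc] at hx
  have hx1 : x < 1 := lt_of_le_of_lt hx.2 hb1
  simp only [Function.comp, smul_eq_mul]
  exact (pointwise_subst hx.1 hx1).symm

lemma key_integral : ∫ v in (0:ℝ)..1, gR v = ∫ x in (0:ℝ)..1, 6 * fL x := by
  have hfint : IntervalIntegrable (fun x => 6 * fL x) volume 0 1 := by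
    apply ContinuousOn.intervalIntegrable
    rw [Set.uIcc_of_le (by norm_num : (0:ℝ) ≤ 1)]
    exact continuousOn_const.mul fL_contOn
  set F : ℝ → ℝ := fun b => ∫ x in (0:ℝ)..b, 6 * fL x with hF
  set G : ℝ → ℝ := fun b => ∫ v in (0:ℝ)..b, gR v with hG
  have hFc : ContinuousOn F (Set.uIcc (0:ℝ) 1) :=
    intervalIntegral.continuousOn_primitive_interval' hfint Set.left_mem_uIcc
  have hGc : ContinuousOn G (Set.uIcc (0:ℝ) 1) :=
    intervalIntegral.continuousOn_primitive_interval' gR_intble Set.left_mem_uIcc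
  have h1mem : (1:ℝ) ∈ Set.uIcc (0:ℝ) 1 := Set.right_mem_uIcc
  have hne : (Filter.NeBot (nhdsWithin (1:ℝ) (Set.Ico 0 1))) := by
    apply mem_closure_iff_nhdsWithin_neBot.mp
    rw [closure_Ico (by norm_num : (0:ℝ) ≠ 1)]
    exact ⟨by norm_num, le_rfl⟩
  have hsub : Set.Ico (0:ℝ) 1 ⊆ Set.uIcc (0:ℝ) 1 := by
    rw [Set.uIcc_of_le (by norm_num : (0:ℝ) ≤ 1)]
    exact Set.Ico_subset_Icc_self
  have htF : Filter.Tendsto F (nhdsWithin 1 (Set.Ico 0 1)) (nhds (F 1)) :=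
    (hFc 1 h1mem).mono_left (nhdsWithin_mono 1 hsub)
  have hphi1 : phi 1 = 1 := by unfold phi; norm_num
  have hphit : Filter.Tendsto phi (nhdsWithin 1 (Set.Ico 0 1)) (nhdsWithin 1 (Set.uIcc (0:ℝ) 1)) := by
    rw [tendsto_nhdsWithin_iff]
    constructor
    · have hca : ContinuousAt phi 1 := by
        have hcn : ContinuousAt (fun u:ℝ => 3*u^2-u^3) 1 := by fun_prop
        have hcd : ContinuousAt (fun u:ℝ => 1+u^3) 1 := by fun_prop
        exact (hcn.div hcd (by norm_num))
      have := hca.tendsto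
      rw [hphi1] at this
      exact this.mono_left nhdsWithin_le_nhds
    · apply Filter.eventually_of_mem self_mem_nhdsWithin
      intro x hx
      apply hsub
      constructor
      · exact phi_nonneg hx.1 hx.2.le
      · have := phi_one_sub hx.1
        have hx' : (0:ℝ) < 1 - x := by linarith [hx.2]
        nlinarith [div_pos (mul_pos (pow_pos hx' 2) (by linarith [hx.1] : (0:ℝ) < 1+2*x))
          (by nlinarith [pow_nonneg hx.1 3] : (0:ℝ) < 1+x^3)]
  have htG : Filter.Tendsto (fun b => G (phi b)) (nhdsWithin 1 (Set.Ico 0 1)) (nhds (G 1)) := by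
    have := (hGc 1 h1mem).tendsto
    exact this.comp hphit
  have heq : F =ᶠ[nhdsWithin 1 (Set.Ico 0 1)] (fun b => G (phi b)) := by
    apply Filter.eventually_of_mem self_mem_nhdsWithin
    intro b hb
    exact subst_lemma hb.1 hb.2
  have : Filter.Tendsto F (nhdsWithin 1 (Set.Ico 0 1)) (nhds (G 1)) :=
    Filter.Tendsto.congr' heq.symm htG
  have hfg : F 1 = G 1 := tendsto_nhds_unique htF this
  rw [hF, hG] at hfg
  simp only at hfg
  exact hfg.symm

lemma pair_cpow {z : ℂ} (hz : 0 < z.re) :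
    z ^ (-(1/2) : ℂ) * (starRingEnd ℂ z) ^ (-(1/2) : ℂ)
      = ((Complex.normSq z ^ (-(1/2) : ℝ) : ℝ) : ℂ) := by
  have hz0 : z ≠ 0 := by
    intro h; rw [h] at hz; simp at hz
  have harg : z.arg ≠ Real.pi := by
    intro h; rw [Complex.arg_eq_pi_iff] at h; linarith [h.1]
  have hconjn : (starRingEnd ℂ) (-(1/2) : ℂ) = -(1/2) := by
    simp [map_ofNat]
  have h1 : (starRingEnd ℂ z) ^ (-(1/2) : ℂ)
      = (starRingEnd ℂ) (z ^ (-(1/2) : ℂ)) := by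
    rw [Complex.conj_cpow _ _ harg, hconjn]
  rw [h1, Complex.mul_conj]
  congr 1
  have he : (-(1/2) : ℂ) = ((-(1/2) : ℝ) : ℂ) := by norm_num
  rw [he, Complex.normSq_eq_norm_sq, Complex.norm_cpow_real, Complex.normSq_eq_norm_sq,
    ← Real.rpow_natCast (‖z‖ ^ (-(1/2) : ℝ)) 2,
    ← Real.rpow_natCast (‖z‖) 2,
    ← Real.rpow_mul (norm_nonneg z), ← Real.rpow_mul (norm_nonneg z)]
  norm_num

lemma ofReal_neg_half_cpow {x : ℝ} (hx : 0 ≤ x) :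
    ((x:ℂ)) ^ (-(1/2) : ℂ) = ((x ^ (-(1/2):ℝ) : ℝ) : ℂ) := by
  rw [show (-(1/2):ℂ) = ((-(1/2):ℝ):ℂ) by norm_num, ← Complex.ofReal_cpow hx]

lemma pair3 {u : ℝ} (hu0 : 0 ≤ u) (hu1 : u ≤ 1) :
    ((1:ℂ) - (1/2 - Complex.I * Real.sqrt 3 / 2) * u) ^ (-(1/2):ℂ) *
      ((1:ℂ) - (1/2 + Complex.I * Real.sqrt 3 / 2) * u) ^ (-(1/2):ℂ)
      = (((1-u+u^2) ^ (-(1/2):ℝ) : ℝ) : ℂ) := by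
  have hconj : ((1 : ℂ) - (1/2 + Complex.I * Real.sqrt 3 / 2) * u)
      = (starRingEnd ℂ) (1 - (1/2 - Complex.I * Real.sqrt 3 / 2) * u) := by
    apply Complex.ext <;>
      simp [Complex.sub_re, Complex.sub_im, Complex.mul_re, Complex.mul_im, Complex.add_re,
        Complex.add_im, Complex.div_re, Complex.div_im, Complex.normSq_apply] <;> ring
  have hre : 0 < ((1:ℂ) - (1/2 - Complex.I * Real.sqrt 3 / 2) * u).re := by
    simp [Complex.sub_re, Complex.mul_re, Complex.div_re, Complex.div_im, Complex.normSq_apply]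
    ring_nf
    linarith
  have hns : Complex.normSq (1 - (1/2 - Complex.I * Real.sqrt 3 / 2) * u) = 1 - u + u^2 := by
    have h3 : (Real.sqrt 3) ^ 2 = 3 := Real.sq_sqrt (by norm_num)
    simp [Complex.normSq_apply, Complex.sub_re, Complex.sub_im, Complex.mul_re, Complex.mul_im,
      Complex.div_re, Complex.div_im]
    ring_nf
    nlinarith [h3]
  rw [hconj, pair_cpow hre, hns]

lemma pair7 {u : ℝ} (hu0 : 0 ≤ u) (hu1 : u ≤ 1) :
    ((1:ℂ) - (1/2 - Complex.I * Real.sqrt 7 / 2) * u) ^ (-(1/2):ℂ) *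
      ((1:ℂ) - (1/2 + Complex.I * Real.sqrt 7 / 2) * u) ^ (-(1/2):ℂ)
      = (((1-u+2*u^2) ^ (-(1/2):ℝ) : ℝ) : ℂ) := by
  have hconj : ((1 : ℂ) - (1/2 + Complex.I * Real.sqrt 7 / 2) * u)
      = (starRingEnd ℂ) (1 - (1/2 - Complex.I * Real.sqrt 7 / 2) * u) := by
    apply Complex.ext <;>
      simp [Complex.sub_re, Complex.sub_im, Complex.mul_re, Complex.mul_im, Complex.add_re,
        Complex.add_im, Complex.div_re, Complex.div_im, Complex.normSq_apply] <;> ring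
  have hre : 0 < ((1:ℂ) - (1/2 - Complex.I * Real.sqrt 7 / 2) * u).re := by
    simp [Complex.sub_re, Complex.mul_re, Complex.div_re, Complex.div_im, Complex.normSq_apply]
    ring_nf
    linarith
  have hns : Complex.normSq (1 - (1/2 - Complex.I * Real.sqrt 7 / 2) * u) = 1 - u + 2*u^2 := by
    have h7 : (Real.sqrt 7) ^ 2 = 7 := Real.sq_sqrt (by norm_num)
    simp [Complex.normSq_apply, Complex.sub_re, Complex.sub_im, Complex.mul_re, Complex.mul_im,
      Complex.div_re, Complex.div_im]
    ring_nf
    nlinarith [h7]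
  rw [hconj, pair_cpow hre, hns]

lemma pairA {u : ℝ} (hu0 : 0 ≤ u) (hu1 : u ≤ 1) :
    ((1:ℂ) - (-3/8 - Complex.I * Real.sqrt 7 / 8) * u) ^ (-(1/2):ℂ) *
      ((1:ℂ) - (-3/8 + Complex.I * Real.sqrt 7 / 8) * u) ^ (-(1/2):ℂ)
      = (((1+3/4*u+1/4*u^2) ^ (-(1/2):ℝ) : ℝ) : ℂ) := by
  have hconj : ((1 : ℂ) - (-3/8 + Complex.I * Real.sqrt 7 / 8) * u)
      = (starRingEnd ℂ) (1 - (-3/8 - Complex.I * Real.sqrt 7 / 8) * u) := by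
    apply Complex.ext
    · norm_num [Complex.sub_re, Complex.sub_im, Complex.mul_re, Complex.mul_im, Complex.add_re,
        Complex.add_im, Complex.div_re, Complex.div_im, Complex.normSq_apply]
    · simp [Complex.sub_re, Complex.sub_im, Complex.mul_re, Complex.mul_im, Complex.add_re,
        Complex.add_im, Complex.div_re, Complex.div_im, Complex.normSq_apply]
      ring
  have hre : 0 < ((1:ℂ) - (-3/8 - Complex.I * Real.sqrt 7 / 8) * u).re := by
    simp [Complex.sub_re, Complex.mul_re, Complex.div_re, Complex.div_im, Complex.normSq_apply]
    ring_nf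
    linarith
  have hns : Complex.normSq (1 - (-3/8 - Complex.I * Real.sqrt 7 / 8) * u) = 1+3/4*u+1/4*u^2 := by
    have h7 : (Real.sqrt 7) ^ 2 = 7 := Real.sq_sqrt (by norm_num)
    simp [Complex.normSq_apply, Complex.sub_re, Complex.sub_im, Complex.mul_re, Complex.mul_im,
      Complex.div_re, Complex.div_im]
    ring_nf
    nlinarith [h7]
  rw [hconj, pair_cpow hre, hns]

lemma lhs_integrand {u : ℝ} (hu0 : 0 ≤ u) (hu1 : u ≤ 1) :
    (u : ℂ) ^ ((2:ℂ) - 1) * ((1 : ℂ) - u) ^ ((3:ℂ) - 2 - 1) *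
      ∏ k, ((1 : ℂ) - (![-1, 1/2 - Complex.I * Real.sqrt 3 / 2, 1/2 + Complex.I * Real.sqrt 3 / 2,
        -2, 1/2 - Complex.I * Real.sqrt 7 / 2, 1/2 + Complex.I * Real.sqrt 7 / 2] k) * u)
        ^ (-((fun _ => (1/2:ℂ)) k)) = ((fL u : ℝ) : ℂ) := by
  have h21 : ((2:ℂ) - 1) = 1 := by norm_num
  have h321 : ((3:ℂ) - 2 - 1) = 0 := by norm_num
  rw [h21, h321, Complex.cpow_one, Complex.cpow_zero]
  simp only [Fin.prod_univ_succ, Fin.prod_univ_zero, Matrix.cons_val_zero, Matrix.cons_val_succ,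
    mul_one]
  have e0 : ((1:ℂ) - -1 * u) = (((1+u : ℝ)) : ℂ) := by push_cast; ring
  have e3 : ((1:ℂ) - -2 * u) = (((1+2*u : ℝ)) : ℂ) := by push_cast; ring
  have hprod : ∀ (x a b c d e f : ℂ),
      x * (a * (b * (c * (d * (e * f))))) = x * ((a * d) * ((b * c) * (e * f))) := by
    intros; ring
  rw [hprod, e0, e3, ofReal_neg_half_cpow (by linarith : (0:ℝ) ≤ 1+u),
    ofReal_neg_half_cpow (by linarith : (0:ℝ) ≤ 1+2*u),
    pair3 hu0 hu1, pair7 hu0 hu1]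
  unfold fL
  push_cast
  ring

lemma rhs_integrand {u : ℝ} (hu0 : 0 ≤ u) (hu1 : u ≤ 1) :
    (u : ℂ) ^ ((1:ℂ) - 1) * ((1 : ℂ) - u) ^ ((3/2:ℂ) - 1 - 1) *
      ∏ k, ((1 : ℂ) - (![-3/8 - Complex.I * Real.sqrt 7 / 8, -3/8 + Complex.I * Real.sqrt 7 / 8] k)
        * u) ^ (-((![1/2, 1/2] : Fin 2 → ℂ) k)) = ((gR u : ℝ) : ℂ) := by
  have h11 : ((1:ℂ) - 1) = 0 := by norm_num
  have h32 : ((3/2:ℂ) - 1 - 1) = -(1/2) := by norm_num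
  rw [h11, h32, Complex.cpow_zero]
  simp only [Fin.prod_univ_succ, Fin.prod_univ_zero, Matrix.cons_val_zero, Matrix.cons_val_succ,
    mul_one]
  have e1 : ((1:ℂ) - u) = (((1-u : ℝ)) : ℂ) := by push_cast; ring
  rw [e1, ofReal_neg_half_cpow (by linarith : (0:ℝ) ≤ 1-u), pairA hu0 hu1]
  unfold gR
  push_cast
  ring

theorem lauricella6_to_appell :
    lauricellaFD 6 2 (fun _ => (1/2 : ℂ)) 3
      ![-1, 1/2 - Complex.I * Real.sqrt 3 / 2, 1/2 + Complex.I * Real.sqrt 3 / 2,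
        -2, 1/2 - Complex.I * Real.sqrt 7 / 2, 1/2 + Complex.I * Real.sqrt 7 / 2] =
      (2/3) * appellF1 1 (1/2) (1/2) (3/2)
        (-3/8 - Complex.I * Real.sqrt 7 / 8) (-3/8 + Complex.I * Real.sqrt 7 / 8) := by
  rw [appellF1, lauricellaFD, lauricellaFD]
  have hIL : (∫ u in (0:ℝ)..1, (u : ℂ) ^ ((2:ℂ) - 1) * ((1 : ℂ) - u) ^ ((3:ℂ) - 2 - 1) *
      ∏ k, ((1 : ℂ) - (![-1, 1/2 - Complex.I * Real.sqrt 3 / 2, 1/2 + Complex.I * Real.sqrt 3 / 2,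
        -2, 1/2 - Complex.I * Real.sqrt 7 / 2, 1/2 + Complex.I * Real.sqrt 7 / 2] k) * u)
        ^ (-((fun _ => (1/2:ℂ)) k)))
      = ((∫ u in (0:ℝ)..1, fL u : ℝ) : ℂ) := by
    rw [← intervalIntegral.integral_ofReal]
    apply intervalIntegral.integral_congr
    intro u hu
    rw [Set.uIcc_of_le (by norm_num : (0:ℝ) ≤ 1)] at hu
    exact lhs_integrand hu.1 hu.2
  have hIR : (∫ u in (0:ℝ)..1, (u : ℂ) ^ ((1:ℂ) - 1) * ((1 : ℂ) - u) ^ ((3/2:ℂ) - 1 - 1) *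
      ∏ k, ((1 : ℂ) - (![-3/8 - Complex.I * Real.sqrt 7 / 8,
        -3/8 + Complex.I * Real.sqrt 7 / 8] k) * u) ^ (-((![1/2, 1/2] : Fin 2 → ℂ) k)))
      = ((∫ u in (0:ℝ)..1, gR u : ℝ) : ℂ) := by
    rw [← intervalIntegral.integral_ofReal]
    apply intervalIntegral.integral_congr
    intro u hu
    rw [Set.uIcc_of_le (by norm_num : (0:ℝ) ≤ 1)] at hu
    exact rhs_integrand hu.1 hu.2
  rw [hIL, hIR]
  have hkey : (∫ v in (0:ℝ)..1, gR v) = 6 * ∫ x in (0:ℝ)..1, fL x := by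
    rw [key_integral, intervalIntegral.integral_const_mul]
  rw [hkey]
  have hG3 : Complex.Gamma 3 = 2 := by
    rw [show (3:ℂ) = ((2:ℕ):ℂ)+1 by norm_num, Complex.Gamma_nat_eq_factorial]
    norm_num
  have hG2 : Complex.Gamma 2 = 1 := by
    rw [show (2:ℂ) = ((1:ℕ):ℂ)+1 by norm_num, Complex.Gamma_nat_eq_factorial]
    norm_num
  have hG1 : Complex.Gamma 1 = 1 := Complex.Gamma_one
  have h32 : (3:ℂ) - 2 = 1 := by norm_num
  have h321 : (3/2:ℂ) - 1 = 1/2 := by norm_num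
  have hGh : Complex.Gamma (3/2) = (1/2) * Complex.Gamma (1/2) := by
    have h := Complex.Gamma_add_one (1/2 : ℂ) (by norm_num)
    rw [show (1/2:ℂ) + 1 = 3/2 by norm_num] at h
    exact h
  have hGhne : Complex.Gamma (1/2) ≠ 0 := by
    apply Complex.Gamma_ne_zero_of_re_pos
    rw [show (1/2:ℂ) = ((1/2:ℝ):ℂ) by norm_num, Complex.ofReal_re]
    norm_num
  rw [h32, h321, hG3, hG2, hG1, hGh]
  push_cast
  field_simp
  ring
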